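/- arXiv:2003.11950 — 6 statements merged into one kernel-verified Lean document; each statement's English description precedes it below -/
import Mathlib

section
/- The correspondence induced by F between strict subobjects of X and subobjects of F(X) is an isomorphism of posets: for strict subobjects X', X'' of X, one has X' ⊆ X'' if and only if F(X') ⊆ F(X''). -/
open CategoryTheory Limits

universe v u v' u'

variable (C : Type u) [Category.{v} C] [Preadditive C] [HasZeroObject C]
  [HasBinaryBiproducts C]
variable (D : Type u') [Category.{v'} D] [Abelian D]
variable (F : C ⥤ D) [F.Additive] [F.Faithful]
variable (V : Type*) [AddCommGroup V] [LinearOrder V] [IsOrderedAddMonoid V]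

/-- The data and axioms of abstract Harder–Narasimhan theory:
an exact structure on `C` (given by its class of short strict exact sequences),
an exact faithful functor `F : C ⥤ D` inducing bijections between strict
subobjects and subobjects of the image, a rank function on `D` and a degree
function on `C`. -/
structure HNTheory where
  /-- `SSE f g` means `0 ⟶ A ⟶ B ⟶ Z ⟶ 0` is a short strict exact sequence. -/
  SSE : ∀ ⦃A B Z : C⦄, (A ⟶ B) → (B ⟶ Z) → Prop
  sse_comp_zero : ∀ ⦃A B Z : C⦄ (f : A ⟶ B) (g : B ⟶ Z), SSE f g → f ≫ g = 0
  sse_mono : ∀ ⦃A B Z : C⦄ (f : A ⟶ B) (g : B ⟶ Z), SSE f g → Mono f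
  sse_epi : ∀ ⦃A B Z : C⦄ (f : A ⟶ B) (g : B ⟶ Z), SSE f g → Epi g
  sse_isKernel : ∀ ⦃A B Z : C⦄ (f : A ⟶ B) (g : B ⟶ Z) (hfg : SSE f g),
    Nonempty (IsLimit (KernelFork.ofι f (sse_comp_zero f g hfg)))
  sse_isCokernel : ∀ ⦃A B Z : C⦄ (f : A ⟶ B) (g : B ⟶ Z) (hfg : SSE f g),
    Nonempty (IsColimit (CokernelCofork.ofπ g (sse_comp_zero f g hfg)))
  /-- `F` is exact. -/
  F_exact : ∀ ⦃A B Z : C⦄ (f : A ⟶ B) (g : B ⟶ Z) (hfg : SSE f g),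
    (ShortComplex.mk (F.map f) (F.map g)
      (by rw [← F.map_comp, sse_comp_zero f g hfg, F.map_zero])).ShortExact
  /-- `F` induces a bijection between strict subobjects of `X` and subobjects
  of `F(X)`. -/
  strict_sub_bij : ∀ X : C,
    Function.Bijective
      (fun S : {S : Subobject X // ∃ (Z : C) (g : X ⟶ Z), SSE S.arrow g} =>
        imageSubobject (F.map S.1.arrow))
  rk : D → ℕ
  rk_iso : ∀ ⦃X Y : D⦄, (X ≅ Y) → rk X = rk Y
  rk_eq_zero_iff : ∀ X : D, rk X = 0 ↔ IsZero X
  rk_additive : ∀ (S : ShortComplex D), S.ShortExact → rk S.X₂ = rk S.X₁ + rk S.X₃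
  deg : C → V
  deg_iso : ∀ ⦃X Y : C⦄, (X ≅ Y) → deg X = deg Y
  deg_additive : ∀ ⦃A B Z : C⦄ (f : A ⟶ B) (g : B ⟶ Z), SSE f g → deg B = deg A + deg Z
  deg_le_of_FIso : ∀ ⦃X Y : C⦄ (f : X ⟶ Y), IsIso (F.map f) → deg X ≤ deg Y
  deg_eq_iff_of_FIso : ∀ ⦃X Y : C⦄ (f : X ⟶ Y), IsIso (F.map f) → (deg X = deg Y ↔ IsIso f)

namespace HNTheory

variable {C D F V}

/-- The subobject `F(X') ⊆ F(X)` associated to a subobject `X' ⊆ X`. -/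
noncomputable def FSub (_h : HNTheory C D F V) {X : C} (S : Subobject X) :
    Subobject (F.obj X) :=
  imageSubobject (F.map S.arrow)

variable (h : HNTheory C D F V)

/-- The rank of an object of `C` is the rank of its image in `D`. -/
def rkC (X : C) : ℕ := h.rk (F.obj X)

/-- A subobject is strict if it is an admissible (strict) monomorphism,
i.e. fits in a short strict exact sequence. -/
def StrictSub {X : C} (S : Subobject X) : Prop :=
  ∃ (Z : C) (g : X ⟶ Z), h.SSE S.arrow g

/-- `μ(X) ≤ μ(Y)`, in cross-multiplied form `rk(Y) • deg(X) ≤ rk(X) • deg(Y)`. -/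
def muLE (X Y : C) : Prop := h.rkC Y • h.deg X ≤ h.rkC X • h.deg Y

/-- `μ(X) < μ(Y)`, in cross-multiplied form. -/
def muLT (X Y : C) : Prop := h.rkC Y • h.deg X < h.rkC X • h.deg Y

/-- `μ(X) = μ(Y)`, in cross-multiplied form. -/
def muEQ (X Y : C) : Prop := h.rkC Y • h.deg X = h.rkC X • h.deg Y

/-- A nonzero object is semistable if every nonzero proper subobject has
slope at most that of the ambient object. -/
def Semistable (X : C) : Prop :=
  ¬ IsZero X ∧ ∀ S : Subobject X, ¬ IsZero ((S : C)) → S ≠ ⊤ → h.muLE (S : C) X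

/-- A subobject of maximal slope. -/
def MaxSlopeSub {X : C} (S : Subobject X) : Prop :=
  ¬ IsZero ((S : C)) ∧ ∀ T : Subobject X, ¬ IsZero ((T : C)) → h.muLE (T : C) (S : C)

/-- `G` is (a model of) the `i`-th graded piece `c i.succ / c i.castSucc` of a
filtration `c` by strict subobjects. -/
def GrAt {X : C} {N : ℕ} (c : Fin (N + 1) → Subobject X) (i : Fin N) (G : C) : Prop :=
  ∃ (hle : c i.castSucc ≤ c i.succ) (p : ((c i.succ : Subobject X) : C) ⟶ G),
    h.SSE (Subobject.ofLE (c i.castSucc) (c i.succ) hle) p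

/-- `c` is a Harder–Narasimhan filtration. -/
def IsHNFilt {X : C} {N : ℕ} (c : Fin (N + 1) → Subobject X) : Prop :=
  StrictMono c ∧ c 0 = ⊥ ∧ c (Fin.last N) = ⊤ ∧ (∀ i, h.StrictSub (c i)) ∧
  (∀ (i : Fin N) (G : C), h.GrAt c i G → h.Semistable G) ∧
  (∀ (i j : Fin N), i < j → ∀ (Gi Gj : C),
    h.GrAt c i Gi → h.GrAt c j Gj → h.muLT Gj Gi)

end HNTheory

/-- (2.1) The correspondence induced by `F` between strict subobjects of `X`
and subobjects of `F(X)` is an isomorphism of posets. -/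
theorem stmt1 (h : HNTheory C D F V) {X : C} (S T : Subobject X)
    (hS : h.StrictSub S) (hT : h.StrictSub T) :
    S ≤ T ↔ h.FSub S ≤ h.FSub T := by
  constructor
  · intro hle
    exact imageSubobject_le _
      (F.map (Subobject.ofLE S T hle) ≫ factorThruImageSubobject (F.map T.arrow))
      (by simp only [HNTheory.FSub]; rw [Category.assoc, imageSubobject_arrow_comp, ← F.map_comp,
            Subobject.ofLE_arrow])
  · intro hle
    simp only [HNTheory.FSub] at hle
    obtain ⟨Z, g, hsse⟩ := hT
    -- `F.map T.arrow ≫ F.map g = 0`, hence the image arrow composed with `F.map g` is zero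
    have hz : F.map T.arrow ≫ F.map g = 0 := by
      rw [← F.map_comp, h.sse_comp_zero _ _ hsse, F.map_zero]
    have himg : (imageSubobject (F.map T.arrow)).arrow ≫ F.map g = 0 :=
      imageSubobject_arrow_comp_eq_zero hz
    have hzS : F.map S.arrow ≫ F.map g = 0 := by
      rw [← imageSubobject_arrow_comp (F.map S.arrow), Category.assoc,
        ← Subobject.ofLE_arrow hle, Category.assoc, himg, comp_zero, comp_zero]
    have hSg : S.arrow ≫ g = 0 := by
      apply F.map_injective
      rw [F.map_comp, F.map_zero, hzS]
    obtain ⟨lim⟩ := h.sse_isKernel _ _ hsse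
    obtain ⟨k, hk⟩ := KernelFork.IsLimit.lift' lim S.arrow hSg
    exact Subobject.le_of_comm k hk
end

section
/- For any subobject X' of an object X of C, the saturation X̃' (the unique strict subobject of X with F(X̃') = F(X')) contains X'. Moreover X̃' is the initial strict subobject of X containing X', and F takes the inclusion X' ⊆ X̃' to an isomorphism. -/
open CategoryTheory Limits

universe v u v' u'

variable (C : Type u) [Category.{v} C] [Preadditive C] [HasZeroObject C]
  [HasBinaryBiproducts C]
variable (D : Type u') [Category.{v'} D] [Abelian D]
variable (F : C ⥤ D) [F.Additive] [F.Faithful]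
variable (V : Type*) [AddCommGroup V] [LinearOrder V] [IsOrderedAddMonoid V]

section Helpers

open CategoryTheory Limits

private lemma comp_eq_zero_of_image_le {E : Type*} [Category E] [Abelian E]
    {A B Z : E} (f : A ⟶ B) (g : B ⟶ Z)
    (hle : imageSubobject f ≤ kernelSubobject g) : f ≫ g = 0 := by
  have h1 : (imageSubobject f).arrow ≫ g = 0 := by
    rw [← Subobject.ofLE_arrow hle, Category.assoc, kernelSubobject_arrow_comp, comp_zero]
  rw [← imageSubobject_arrow_comp f, Category.assoc, h1, comp_zero]

end Helpers

/-- (2.5) The saturation `T` of a subobject `S` (the strict subobject with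
`F(T) = F(S)`) contains `S`, is the initial strict subobject containing `S`,
and `F` takes the inclusion `S ⊆ T` to an isomorphism. -/
theorem stmt2 (h : HNTheory C D F V) {X : C} (S T : Subobject X)
    (hT : h.StrictSub T) (hFT : h.FSub T = h.FSub S) :
    ∃ hle : S ≤ T,
      (∀ U : Subobject X, h.StrictSub U → S ≤ U → T ≤ U) ∧
      IsIso (F.map (Subobject.ofLE S T hle)) := by
  obtain ⟨Z, g, hsse⟩ := hT
  obtain ⟨limT⟩ := h.sse_isKernel _ _ hsse
  have hFSub : ∀ (S' : Subobject X), h.FSub S' = imageSubobject (F.map S'.arrow) :=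
    fun _ => rfl
  rw [hFSub, hFSub] at hFT
  haveI hmonoT : Mono (F.map T.arrow) := (h.F_exact _ _ hsse).mono_f
  -- `S ≤ T`
  have hFTg : F.map T.arrow ≫ F.map g = 0 := by
    rw [← F.map_comp, h.sse_comp_zero _ _ hsse, F.map_zero]
  have hFSg : F.map S.arrow ≫ F.map g = 0 := by
    refine comp_eq_zero_of_image_le _ _ ?_
    rw [← hFT]
    exact image_le_kernel _ _ hFTg
  have hSg : S.arrow ≫ g = 0 := by
    apply F.map_injective
    rw [F.map_comp, F.map_zero, hFSg]
  obtain ⟨l, hl⟩ := KernelFork.IsLimit.lift' limT S.arrow hSg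
  have hle : S ≤ T := Subobject.le_of_comm l hl
  refine ⟨hle, ?_, ?_⟩
  · -- initiality
    rintro U ⟨Z', g', hsse'⟩ hSU
    obtain ⟨limU⟩ := h.sse_isKernel _ _ hsse'
    have hUg' : F.map U.arrow ≫ F.map g' = 0 := by
      rw [← F.map_comp, h.sse_comp_zero _ _ hsse', F.map_zero]
    have himS : imageSubobject (F.map S.arrow) ≤ imageSubobject (F.map U.arrow) := by
      have : F.map (Subobject.ofLE S U hSU) ≫ F.map U.arrow = F.map S.arrow := by
        rw [← F.map_comp, Subobject.ofLE_arrow]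
      rw [← this]
      exact imageSubobject_comp_le _ _
    have hFTg' : F.map T.arrow ≫ F.map g' = 0 := by
      refine comp_eq_zero_of_image_le _ _ ?_
      rw [hFT]
      exact le_trans himS (image_le_kernel _ _ hUg')
    have hTg' : T.arrow ≫ g' = 0 := by
      apply F.map_injective
      rw [F.map_comp, F.map_zero, hFTg']
    obtain ⟨m, hm⟩ := KernelFork.IsLimit.lift' limU T.arrow hTg'
    exact Subobject.le_of_comm m hm
  · -- `F` maps the inclusion to an isomorphism
    set u := F.map (Subobject.ofLE S T hle) with hu_def
    have hu : u ≫ F.map T.arrow = F.map S.arrow := by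
      rw [hu_def, ← F.map_comp, Subobject.ofLE_arrow]
    -- `u` is a monomorphism
    obtain ⟨W, hW⟩ := (h.strict_sub_bij ((S : Subobject X) : C)).2 (kernelSubobject u)
    have hW' : imageSubobject (F.map W.1.arrow) = kernelSubobject u := hW
    obtain ⟨Zw, gw, hw⟩ := W.2
    haveI : Mono (F.map W.1.arrow) := (h.F_exact _ _ hw).mono_f
    have z1 : F.map W.1.arrow ≫ u = 0 :=
      comp_eq_zero_of_image_le _ _ (le_of_eq hW')
    have z2 : W.1.arrow ≫ Subobject.ofLE S T hle = 0 := by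
      apply F.map_injective
      rw [F.map_comp, F.map_zero, ← hu_def, z1]
    have z3 : W.1.arrow = 0 := by
      rw [← cancel_mono (Subobject.arrow S), zero_comp, ← Subobject.ofLE_arrow hle,
        ← Category.assoc, z2, zero_comp]
    have hK : kernelSubobject u = ⊥ := by
      rw [← hW', z3, F.map_zero, imageSubobject_zero]
    have hkerzero : IsZero (kernel u) :=
      IsZero.of_iso (isZero_zero D)
        ((kernelSubobjectIso u).symm ≪≫ Subobject.isoOfEq _ _ hK ≪≫
          Subobject.botCoeIsoZero)
    haveI hmono_u : Mono u := Abelian.mono_of_kernel_ι_eq_zero u (hkerzero.eq_zero_of_src _)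
    haveI : Mono (F.map S.arrow) := by rw [← hu]; exact mono_comp _ _
    have hmk : Subobject.mk (F.map S.arrow) = Subobject.mk (F.map T.arrow) := by
      rw [← imageSubobject_mono (F.map S.arrow), ← imageSubobject_mono (F.map T.arrow), hFT]
    have : u = (Subobject.isoOfMkEqMk (F.map S.arrow) (F.map T.arrow) hmk).hom := by
      rw [← cancel_mono (F.map T.arrow), hu, Subobject.isoOfMkEqMk_hom,
        Subobject.ofMkLEMk_comp]
    rw [this]
    infer_instance
end

section
/- Every morphism f : X → Y in C has a kernel and an image in C; the kernel is a strict subobject of X, and X/ker f is canonically identified with the image of f. -/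
open CategoryTheory Limits

universe v u v' u'

variable (C : Type u) [Category.{v} C] [Preadditive C] [HasZeroObject C]
  [HasBinaryBiproducts C]
variable (D : Type u') [Category.{v'} D] [Abelian D]
variable (F : C ⥤ D) [F.Additive] [F.Faithful]
variable (V : Type*) [AddCommGroup V] [LinearOrder V] [IsOrderedAddMonoid V]

/-- In an abelian category, if the image of `k` coincides with the kernel of `f`
and `k ≫ g = 0`, then any morphism killed by `f` is killed by `g`. -/
lemma auxD {E : Type*} [Category E] [Abelian E] {K X Y Z : E} (k : K ⟶ X) (f : X ⟶ Y)
    (g : X ⟶ Z) (h1 : imageSubobject k = kernelSubobject f) (h2 : k ≫ g = 0)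
    {W : E} (l : W ⟶ X) (hl : l ≫ f = 0) : l ≫ g = 0 := by
  have hfac : (kernelSubobject f).Factors l := kernelSubobject_factors f l hl
  rw [← h1] at hfac
  have hft := Subobject.factorThru_arrow _ _ hfac
  rw [← hft, Category.assoc, imageSubobject_arrow_comp_eq_zero h2, Limits.comp_zero]

/-- (2.7) Every morphism `f : X ⟶ Y` in `C` has a kernel `k : K ⟶ X` and an
image; the kernel is a strict subobject of `X` (with quotient `q : X ⟶ Q`),
and `X/ker f = Q` is canonically identified with the image of `f`, namely `Q`
embeds in `Y` via a monomorphism `m` with `q ≫ m = f` which is minimal among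
subobjects of `Y` through which `f` factors. -/
theorem stmt3 (h : HNTheory C D F V) {X Y : C} (f : X ⟶ Y) :
    ∃ (K : C) (k : K ⟶ X) (hk : k ≫ f = 0),
      Nonempty (IsLimit (KernelFork.ofι k hk)) ∧
      ∃ (Q : C) (q : X ⟶ Q), h.SSE k q ∧
        ∃ (m : Q ⟶ Y), Mono m ∧ q ≫ m = f ∧
          ∀ (Y' : C) (ι : Y' ⟶ Y), Mono ι → (∃ e : X ⟶ Y', e ≫ ι = f) →
            ∃ u : Q ⟶ Y', u ≫ ι = m := by
  -- obtain the strict subobject of `X` corresponding to `ker (F.map f)`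
  obtain ⟨S, hS⟩ := (h.strict_sub_bij X).2 (kernelSubobject (F.map f))
  obtain ⟨Sub, Zv, g, hSSE⟩ := S
  simp only at hS
  set K := (Sub : C) with hK
  set k : K ⟶ X := Sub.arrow with hk
  -- basic facts in D
  have hkg0 : k ≫ g = 0 := h.sse_comp_zero k g hSSE
  have hFkg0 : F.map k ≫ F.map g = 0 := by
    rw [← F.map_comp, hkg0, F.map_zero]
  have harr : (imageSubobject (F.map k)).arrow ≫ F.map f = 0 := by
    rw [hS]; exact kernelSubobject_arrow_comp (F.map f)
  have hkf : k ≫ f = 0 := by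
    apply F.map_injective
    rw [F.map_comp, F.map_zero, ← imageSubobject_arrow_comp (F.map k), Category.assoc, harr,
      comp_zero]
  -- any `l` with `l ≫ f = 0` also satisfies `l ≫ g = 0`
  have key : ∀ {W : C} (l : W ⟶ X), l ≫ f = 0 → l ≫ g = 0 := by
    intro W l hl
    apply F.map_injective
    rw [F.map_comp, F.map_zero]
    exact auxD (F.map k) (F.map f) (F.map g) hS hFkg0 (F.map l)
      (by rw [← F.map_comp, hl, F.map_zero])
  haveI : Mono k := h.sse_mono k g hSSE
  haveI : Epi g := h.sse_epi k g hSSE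
  obtain ⟨hKer⟩ := h.sse_isKernel k g hSSE
  obtain ⟨hCoker⟩ := h.sse_isCokernel k g hSSE
  refine ⟨K, k, hkf, ⟨KernelFork.IsLimit.ofι' k hkf (fun {A} l hl => ?_)⟩, Zv, g, hSSE, ?_⟩
  · obtain ⟨t, ht⟩ := KernelFork.IsLimit.lift' hKer l (key l hl)
    exact ⟨t, ht⟩
  · -- construct `m`
    obtain ⟨m, hm⟩ := CokernelCofork.IsColimit.desc' hCoker f hkf
    simp only [Cofork.π_ofπ] at hm
    have hFm : F.map g ≫ F.map m = F.map f := by rw [← F.map_comp, hm]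
    have hSE := h.F_exact k g hSSE
    haveI hepi : Epi (F.map g) := hSE.epi_g
    haveI : Mono (F.map m) := by
      apply Abelian.Pseudoelement.mono_of_zero_of_map_zero
      intro a ha
      obtain ⟨b, rfl⟩ := Abelian.Pseudoelement.pseudo_surjective_of_epi (F.map g) a
      rw [← Abelian.Pseudoelement.comp_apply, hFm] at ha
      revert ha
      refine Quotient.inductionOn b (fun b' ha => ?_)
      have hb : b'.hom ≫ F.map f = 0 := by
        rw [Abelian.Pseudoelement.pseudoApply_mk'] at ha
        exact (Abelian.Pseudoelement.pseudoZero_iff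
          ((Over.mk (b'.hom ≫ F.map f)) : Over (F.obj Y))).mp ha
      have hbg : b'.hom ≫ F.map g = 0 := auxD (F.map k) (F.map f) (F.map g) hS hFkg0 _ hb
      rw [Abelian.Pseudoelement.pseudoApply_mk']
      exact (Abelian.Pseudoelement.pseudoZero_iff
        ((Over.mk (b'.hom ≫ F.map g)) : Over (F.obj Zv))).mpr hbg
    refine ⟨m, F.mono_of_mono_map inferInstance, hm, ?_⟩
    intro Y' ι hι ⟨e, he⟩
    have hke : k ≫ e = 0 := by
      haveI := hι
      rw [← cancel_mono ι, Category.assoc, he, hkf, zero_comp]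
    obtain ⟨u, hu⟩ := CokernelCofork.IsColimit.desc' hCoker e hke
    simp only [Cofork.π_ofπ] at hu
    refine ⟨u, ?_⟩
    rw [← cancel_epi g, ← Category.assoc, hu, he, hm]
end

section
/- Let X be an object of C with subobjects X', X'' such that the inclusions X' ∩ X'' ⊆ X' and X'' ⊆ X'+X'' are strict. Then the canonical map X'/(X' ∩ X'') → (X'+X'')/X'' induced by X' ⊆ X'+X'' is an isomorphism. -/
open CategoryTheory Limits

universe v u v' u'

variable (C : Type u) [Category.{v} C] [Preadditive C] [HasZeroObject C]
  [HasBinaryBiproducts C]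
variable (D : Type u') [Category.{v'} D] [Abelian D]
variable (F : C ⥤ D) [F.Additive] [F.Faithful]
variable (V : Type*) [AddCommGroup V] [LinearOrder V] [IsOrderedAddMonoid V]

/-- (2.10) If the inclusions `S ∩ T ⊆ S` and `T ⊆ S + T` are strict, then the
canonical map `S/(S ∩ T) → (S + T)/T` induced by `S ⊆ S + T` is an
isomorphism.  Here quotients are presented by the corresponding short strict
exact sequences. -/
theorem stmt5 (h : HNTheory C D F V) {X : C} (S T U I : Subobject X)
    (hU : IsLUB {S, T} U) (hI : IsGLB {S, T} I)
    (hIS : I ≤ S) (hTU : T ≤ U) (hSU : S ≤ U)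
    (Q₁ : C) (q₁ : ((S : Subobject X) : C) ⟶ Q₁)
    (hq₁ : h.SSE (Subobject.ofLE I S hIS) q₁)
    (Q₂ : C) (q₂ : ((U : Subobject X) : C) ⟶ Q₂)
    (hq₂ : h.SSE (Subobject.ofLE T U hTU) q₂) :
    ∃! φ : Q₁ ⟶ Q₂, q₁ ≫ φ = Subobject.ofLE S U hSU ≫ q₂ ∧ IsIso φ := by
  classical
  -- two small helper facts about subobjects in `D`
  have harr : ∀ {Z : D} {P Q : Subobject Z}, P ≤ Q → ∀ {W : D} (g : Z ⟶ W),
      Q.arrow ≫ g = 0 → P.arrow ≫ g = 0 := by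
    intro Z P Q hle W g h0
    rw [← Subobject.ofLE_arrow hle, Category.assoc, h0, comp_zero]
  have hfac : ∀ {Y Z : D} (f : Y ⟶ Z) {P : Subobject Z}, imageSubobject f ≤ P →
      ∀ {W : D} (g : Z ⟶ W), P.arrow ≫ g = 0 → f ≫ g = 0 := by
    intro Y Z f P hle W g h0
    rw [← imageSubobject_arrow_comp f, Category.assoc, harr hle g h0, comp_zero]
  have hIT : I ≤ T := hI.1 (by simp)
  set i₁ : ((I : Subobject X) : C) ⟶ ((S : Subobject X) : C) := Subobject.ofLE I S hIS
    with hi₁def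
  set i₂ : ((T : Subobject X) : C) ⟶ ((U : Subobject X) : C) := Subobject.ofLE T U hTU
    with hi₂def
  set j : ((S : Subobject X) : C) ⟶ ((U : Subobject X) : C) := Subobject.ofLE S U hSU
    with hjdef
  set k : ((I : Subobject X) : C) ⟶ ((T : Subobject X) : C) := Subobject.ofLE I T hIT
    with hkdef
  have hi₁a : i₁ ≫ S.arrow = I.arrow := Subobject.ofLE_arrow _
  have hi₂a : i₂ ≫ U.arrow = T.arrow := Subobject.ofLE_arrow _
  have hja : j ≫ U.arrow = S.arrow := Subobject.ofLE_arrow _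
  have hka : k ≫ T.arrow = I.arrow := Subobject.ofLE_arrow _
  have hi1q1 : i₁ ≫ q₁ = 0 := h.sse_comp_zero _ _ hq₁
  have hi2q2 : i₂ ≫ q₂ = 0 := h.sse_comp_zero _ _ hq₂
  have hij : i₁ ≫ j = k ≫ i₂ := by
    apply (cancel_mono U.arrow).1
    rw [Category.assoc, hja, hi₁a, Category.assoc, hi₂a, hka]
  haveI epiq₁ : Epi q₁ := h.sse_epi _ _ hq₁
  haveI epiq₂ : Epi q₂ := h.sse_epi _ _ hq₂
  obtain ⟨lk₂⟩ := h.sse_isKernel _ _ hq₂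
  obtain ⟨ck₁⟩ := h.sse_isCokernel _ _ hq₁
  obtain ⟨ck₂⟩ := h.sse_isCokernel _ _ hq₂
  -- the "sum" map θ : S ⊞ T ⟶ U
  set θ : (((S : Subobject X) : C) ⊞ ((T : Subobject X) : C)) ⟶ ((U : Subobject X) : C) :=
    biprod.fst ≫ j + biprod.snd ≫ i₂ with hθdef
  have hinlθ : biprod.inl ≫ θ = j := by
    rw [hθdef, Preadditive.comp_add, ← Category.assoc, ← Category.assoc]
    simp
  have hinrθ : biprod.inr ≫ θ = i₂ := by
    rw [hθdef, Preadditive.comp_add, ← Category.assoc, ← Category.assoc]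
    simp
  have hθq₂ : θ ≫ q₂ = biprod.fst ≫ j ≫ q₂ := by
    rw [hθdef, Preadditive.add_comp, Category.assoc, Category.assoc, hi2q2, comp_zero, add_zero]
  -- a strict subobject of S ⊞ T whose F-image is the kernel of F θ
  obtain ⟨⟨N, ZN, gN, hsseN⟩, hN⟩ :=
    (h.strict_sub_bij (((S : Subobject X) : C) ⊞ ((T : Subobject X) : C))).2
      (kernelSubobject (F.map θ))
  simp only at hN
  have hNgN : N.arrow ≫ gN = 0 := h.sse_comp_zero _ _ hsseN
  obtain ⟨ckN⟩ := h.sse_isCokernel _ _ hsseN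
  haveI epigN : Epi gN := h.sse_epi _ _ hsseN
  haveI epiFgN : Epi (F.map gN) := (h.F_exact _ _ hsseN).epi_g
  have hFN0 : F.map N.arrow ≫ F.map θ = 0 :=
    hfac (F.map N.arrow) hN.le (F.map θ) (kernelSubobject_arrow_comp _)
  have hNθ : N.arrow ≫ θ = 0 := F.map_injective (by rw [F.map_comp, hFN0, F.map_zero])
  have hkergN : (kernelSubobject (F.map θ)).arrow ≫ F.map gN = 0 :=
    harr hN.ge (F.map gN)
      (imageSubobject_arrow_comp_eq_zero (by rw [← F.map_comp, hNgN, F.map_zero]))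
  -- the comparison map ρ : ZN ⟶ U
  obtain ⟨ρ, hρ⟩ := CokernelCofork.IsColimit.desc' ckN θ hNθ
  rw [Cofork.π_ofπ] at hρ
  -- ρ is a monomorphism
  have monoFρ : Mono (F.map ρ) := by
    apply Preadditive.mono_of_cancel_zero
    intro P t ht
    have hFρ : F.map gN ≫ F.map ρ = F.map θ := by rw [← F.map_comp, hρ]
    have h2 : pullback.snd t (F.map gN) ≫ F.map θ = 0 := by
      rw [← hFρ, ← Category.assoc, ← pullback.condition, Category.assoc, ht, comp_zero]
    have h3 : pullback.snd t (F.map gN) ≫ F.map gN = 0 := by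
      have hf := kernelSubobject_factors (F.map θ) (pullback.snd t (F.map gN)) h2
      rw [← Subobject.factorThru_arrow _ _ hf, Category.assoc, hkergN, comp_zero]
    have h4 : pullback.fst t (F.map gN) ≫ t = 0 := by rw [pullback.condition, h3]
    exact zero_of_epi_comp (pullback.fst t (F.map gN)) h4
  haveI monoρ : Mono ρ := F.mono_of_mono_map monoFρ
  -- the key lemma coming from the greatest-lower-bound property of I
  have glb_lemma : ∀ {A : D} (s : A ⟶ F.obj ((S : Subobject X) : C)),
      s ≫ F.map (j ≫ q₂) = 0 → s ≫ F.map q₁ = 0 := by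
    intro A s hs
    obtain ⟨⟨J, ZJ, gJ, hsseJ⟩, hJ⟩ :=
      (h.strict_sub_bij ((S : Subobject X) : C)).2 (imageSubobject s)
    simp only at hJ
    have hKjq : (imageSubobject s).arrow ≫ F.map (j ≫ q₂) = 0 :=
      imageSubobject_arrow_comp_eq_zero hs
    have hFJ : F.map J.arrow ≫ F.map (j ≫ q₂) = 0 :=
      hfac (F.map J.arrow) hJ.le (F.map (j ≫ q₂)) hKjq
    have hJjq : (J.arrow ≫ j) ≫ q₂ = 0 := by
      have h' : J.arrow ≫ (j ≫ q₂) = 0 :=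
        F.map_injective (by rw [F.map_comp, hFJ, F.map_zero])
      rw [Category.assoc, h']
    obtain ⟨u, hu⟩ := KernelFork.IsLimit.lift' lk₂ (J.arrow ≫ j) hJjq
    rw [Fork.ι_ofι] at hu
    haveI : Mono (J.arrow ≫ S.arrow) := mono_comp _ _
    have hle1 : Subobject.mk (J.arrow ≫ S.arrow) ≤ S := Subobject.mk_le_of_comm J.arrow rfl
    have hle2 : Subobject.mk (J.arrow ≫ S.arrow) ≤ T := by
      refine Subobject.mk_le_of_comm u ?_
      rw [← hi₂a, ← Category.assoc, hu, Category.assoc, hja]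
    have hleI : Subobject.mk (J.arrow ≫ S.arrow) ≤ I := by
      refine hI.2 ?_
      intro x hx
      simp only [Set.mem_insert_iff, Set.mem_singleton_iff] at hx
      rcases hx with rfl | rfl
      exacts [hle1, hle2]
    have hv : Subobject.ofMkLE (J.arrow ≫ S.arrow) I hleI ≫ I.arrow = J.arrow ≫ S.arrow :=
      Subobject.ofMkLE_arrow hleI
    have hvi₁ : Subobject.ofMkLE (J.arrow ≫ S.arrow) I hleI ≫ i₁ = J.arrow := by
      apply (cancel_mono S.arrow).1
      rw [Category.assoc, hi₁a, hv]
    have hJq₁ : J.arrow ≫ q₁ = 0 := by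
      rw [← hvi₁, Category.assoc, hi1q1, comp_zero]
    have hKq₁ : (imageSubobject s).arrow ≫ F.map q₁ = 0 :=
      harr hJ.ge (F.map q₁)
        (imageSubobject_arrow_comp_eq_zero (by rw [← F.map_comp, hJq₁, F.map_zero]))
    rw [← imageSubobject_arrow_comp s, Category.assoc, hKq₁, comp_zero]
  -- descending fst ≫ q₁ along gN
  have hκ : (kernelSubobject (F.map θ)).arrow ≫ F.map (biprod.fst ≫ q₁) = 0 := by
    have hκθ : (kernelSubobject (F.map θ)).arrow ≫ F.map θ = 0 := kernelSubobject_arrow_comp _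
    have hs : ((kernelSubobject (F.map θ)).arrow ≫ F.map biprod.fst) ≫ F.map (j ≫ q₂) = 0 := by
      rw [Category.assoc, ← F.map_comp, ← hθq₂, F.map_comp, ← Category.assoc, hκθ, zero_comp]
    have := glb_lemma ((kernelSubobject (F.map θ)).arrow ≫ F.map biprod.fst) hs
    rw [F.map_comp, ← Category.assoc]
    exact this
  have hFNfq : F.map N.arrow ≫ F.map (biprod.fst ≫ q₁) = 0 :=
    hfac (F.map N.arrow) hN.le (F.map (biprod.fst ≫ q₁)) hκ
  have hNfq : N.arrow ≫ (biprod.fst ≫ q₁) = 0 :=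
    F.map_injective (by rw [F.map_comp, hFNfq, F.map_zero])
  obtain ⟨uZ, huZ⟩ := CokernelCofork.IsColimit.desc' ckN (biprod.fst ≫ q₁) hNfq
  rw [Cofork.π_ofπ] at huZ
  -- ρ is a split epimorphism, hence an isomorphism
  haveI : Mono (ρ ≫ U.arrow) := mono_comp _ _
  have key1 : (biprod.inl ≫ gN) ≫ ρ ≫ U.arrow = S.arrow := by
    rw [Category.assoc, ← Category.assoc gN ρ U.arrow, hρ, ← Category.assoc, hinlθ, hja]
  have key2 : (biprod.inr ≫ gN) ≫ ρ ≫ U.arrow = T.arrow := by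
    rw [Category.assoc, ← Category.assoc gN ρ U.arrow, hρ, ← Category.assoc, hinrθ, hi₂a]
  have hSV : S ≤ Subobject.mk (ρ ≫ U.arrow) := Subobject.le_mk_of_comm (biprod.inl ≫ gN) key1
  have hTV : T ≤ Subobject.mk (ρ ≫ U.arrow) := Subobject.le_mk_of_comm (biprod.inr ≫ gN) key2
  have hUV : U ≤ Subobject.mk (ρ ≫ U.arrow) := by
    refine hU.2 ?_
    intro x hx
    simp only [Set.mem_insert_iff, Set.mem_singleton_iff] at hx
    rcases hx with rfl | rfl
    exacts [hSV, hTV]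
  have hw : Subobject.ofLEMk U (ρ ≫ U.arrow) hUV ≫ (ρ ≫ U.arrow) = U.arrow :=
    Subobject.ofLEMk_comp hUV
  have hwρ : Subobject.ofLEMk U (ρ ≫ U.arrow) hUV ≫ ρ = 𝟙 _ := by
    apply (cancel_mono U.arrow).1
    rw [Category.assoc, hw, Category.id_comp]
  haveI : IsSplitEpi ρ := ⟨⟨⟨Subobject.ofLEMk U (ρ ≫ U.arrow) hUV, hwρ⟩⟩⟩
  haveI isoρ : IsIso ρ := isIso_of_mono_of_isSplitEpi ρ
  haveI epiθ : Epi θ := by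
    have : Epi (gN ≫ ρ) := epi_comp _ _
    rwa [hρ] at this
  -- the map u : U ⟶ Q₁
  set u : ((U : Subobject X) : C) ⟶ Q₁ := inv ρ ≫ uZ with hudef
  have hθu : θ ≫ u = biprod.fst ≫ q₁ := by
    rw [hudef, ← hρ, Category.assoc, IsIso.hom_inv_id_assoc, huZ]
  have hi₂u : i₂ ≫ u = 0 := by
    rw [← hinrθ, Category.assoc, hθu, ← Category.assoc, biprod.inr_fst, zero_comp]
  have hju : j ≫ u = q₁ := by
    rw [← hinlθ, Category.assoc, hθu, ← Category.assoc, biprod.inl_fst, Category.id_comp]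
  -- construction of φ and σ
  have hijq : i₁ ≫ (j ≫ q₂) = 0 := by
    rw [← Category.assoc, hij, Category.assoc, hi2q2, comp_zero]
  obtain ⟨φ, hφ⟩ := CokernelCofork.IsColimit.desc' ck₁ (j ≫ q₂) hijq
  rw [Cofork.π_ofπ] at hφ
  obtain ⟨σ, hσ⟩ := CokernelCofork.IsColimit.desc' ck₂ u hi₂u
  rw [Cofork.π_ofπ] at hσ
  have huφ : u ≫ φ = q₂ := by
    apply (cancel_epi θ).1
    rw [← Category.assoc, hθu, Category.assoc, hφ, hθq₂]
  have hσφ : σ ≫ φ = 𝟙 Q₂ := by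
    apply (cancel_epi q₂).1
    rw [← Category.assoc, hσ, huφ, Category.comp_id]
  have hφσ : φ ≫ σ = 𝟙 Q₁ := by
    apply (cancel_epi q₁).1
    rw [← Category.assoc, hφ, Category.assoc, hσ, hju, Category.comp_id]
  refine ⟨φ, ⟨hφ, ⟨σ, hφσ, hσφ⟩⟩, ?_⟩
  rintro φ' ⟨hc, -⟩
  apply (cancel_epi q₁).1
  rw [hφ, hc]
end

section
/- Let X be an object of C and X' a nonzero subobject whose slope is maximal among slopes of nonzero subobjects of X. Then X' is a strict subobject of X and is semistable. In particular, every object of rank 1 is semistable. -/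
open CategoryTheory Limits

universe v u v' u'

variable (C : Type u) [Category.{v} C] [Preadditive C] [HasZeroObject C]
  [HasBinaryBiproducts C]
variable (D : Type u') [Category.{v'} D] [Abelian D]
variable (F : C ⥤ D) [F.Additive] [F.Faithful]
variable (V : Type*) [AddCommGroup V] [LinearOrder V] [IsOrderedAddMonoid V]

section Aux

set_option linter.unusedSectionVars false

variable {C D F V}

lemma HN_isZero_of_F (A : C) (hz : IsZero (F.obj A)) : IsZero A := by
  rw [IsZero.iff_id_eq_zero] at hz ⊢
  apply F.map_injective
  rw [F.map_id, F.map_zero, hz]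

lemma HN_isZero_F (A : C) (hz : IsZero A) : IsZero (F.obj A) := by
  rw [IsZero.iff_id_eq_zero] at hz ⊢
  rw [← F.map_id, hz, F.map_zero]

lemma HN_rkC_ne_zero (h : HNTheory C D F V) {A : C} (hA : ¬ IsZero A) : h.rkC A ≠ 0 := by
  intro h0
  exact hA (HN_isZero_of_F A ((h.rk_eq_zero_iff (F.obj A)).1 h0))

lemma HN_rkC_iso (h : HNTheory C D F V) {A B : C} (e : A ≅ B) : h.rkC A = h.rkC B :=
  h.rk_iso (F.mapIso e)

/-- `F` maps subobject arrows to monomorphisms. -/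
lemma HN_mono_F_arrow (h : HNTheory C D F V) {X : C} (S : Subobject X) :
    Mono (F.map S.arrow) := by
  obtain ⟨⟨T, Z, g, hsse⟩, hT⟩ :=
    (h.strict_sub_bij (S : C)).2 (kernelSubobject (F.map S.arrow))
  dsimp only at hT
  haveI hmT : Mono (F.map T.arrow) := (h.F_exact _ _ hsse).mono_f
  have harr : (imageSubobject (F.map T.arrow)).arrow =
      Subobject.ofLE _ _ (le_of_eq hT) ≫ (kernelSubobject (F.map S.arrow)).arrow :=
    (Subobject.ofLE_arrow (le_of_eq hT)).symm
  have h0 : F.map T.arrow ≫ F.map S.arrow = 0 := by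
    rw [← imageSubobject_arrow_comp (F.map T.arrow), Category.assoc, harr,
      Category.assoc, kernelSubobject_arrow_comp, comp_zero, comp_zero]
  have hTz : T.arrow = 0 := by
    have hc : T.arrow ≫ S.arrow = 0 :=
      F.map_injective (by rw [F.map_comp, h0, F.map_zero])
    exact zero_of_comp_mono S.arrow hc
  have hFT : IsZero (F.obj (T : C)) := by
    rw [IsZero.iff_id_eq_zero, ← cancel_mono (F.map T.arrow), Category.id_comp,
      zero_comp, hTz, F.map_zero]
  have himgz : IsZero ((imageSubobject (F.map T.arrow)) : D) := by
    rw [IsZero.iff_id_eq_zero, ← cancel_epi (factorThruImageSubobject (F.map T.arrow)),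
      Category.comp_id, comp_zero]
    exact hFT.eq_of_src _ _
  have hkerz : IsZero ((kernelSubobject (F.map S.arrow)) : D) := hT ▸ himgz
  apply Preadditive.mono_of_cancel_zero
  intro W t ht
  rw [← factorThruKernelSubobject_comp_arrow (F.map S.arrow) t ht,
    hkerz.eq_of_tgt (factorThruKernelSubobject (F.map S.arrow) t ht) 0, zero_comp]

/-- Saturation: every subobject is contained in a strict subobject with
isomorphic image under `F`. -/
lemma HN_saturation (h : HNTheory C D F V) {X : C} (S : Subobject X) :
    ∃ (T : Subobject X) (hle : S ≤ T), h.StrictSub T ∧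
      IsIso (F.map (Subobject.ofLE S T hle)) := by
  haveI hmS : Mono (F.map S.arrow) := HN_mono_F_arrow h S
  obtain ⟨⟨T, Z, g, hsse⟩, hT⟩ := (h.strict_sub_bij X).2 (imageSubobject (F.map S.arrow))
  dsimp only at hT
  haveI hmT : Mono (F.map T.arrow) := (h.F_exact _ _ hsse).mono_f
  rw [imageSubobject_mono (F.map T.arrow), imageSubobject_mono (F.map S.arrow)] at hT
  let e : F.obj (S : C) ≅ F.obj (T : C) :=
    (Subobject.underlyingIso (F.map S.arrow)).symm ≪≫ Subobject.isoOfEq _ _ hT.symm ≪≫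
      Subobject.underlyingIso (F.map T.arrow)
  have hiso : (Subobject.isoOfEq _ _ hT.symm).hom ≫
      (Subobject.underlyingIso (F.map T.arrow)).hom ≫ F.map T.arrow =
      (Subobject.mk (F.map S.arrow)).arrow := by
    rw [Subobject.underlyingIso_hom_comp_eq_mk]
    exact Subobject.ofLE_arrow (le_of_eq hT.symm)
  have he : e.hom ≫ F.map T.arrow = F.map S.arrow := by
    simp only [e, Iso.trans_hom, Iso.symm_hom, Category.assoc]
    rw [hiso, Subobject.underlyingIso_arrow]
  have h0 : S.arrow ≫ g = 0 := by
    apply F.map_injective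
    rw [F.map_comp, F.map_zero, ← he, Category.assoc, ← F.map_comp,
      h.sse_comp_zero _ _ hsse, F.map_zero, comp_zero]
  obtain ⟨hker⟩ := h.sse_isKernel _ _ hsse
  obtain ⟨l, hl⟩ := KernelFork.IsLimit.lift' hker S.arrow h0
  rw [Fork.ι_ofι] at hl
  have hle : S ≤ T := Subobject.le_of_comm l hl
  refine ⟨T, hle, ⟨Z, g, hsse⟩, ?_⟩
  have hu : F.map (Subobject.ofLE S T hle) = e.hom := by
    rw [← cancel_mono (F.map T.arrow), he, ← F.map_comp, Subobject.ofLE_arrow]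
  rw [hu]
  infer_instance

end Aux

/-- (4.2), (4.7) A nonzero subobject of maximal slope is a strict subobject
and is semistable; in particular, every object of rank one is semistable. -/

theorem stmt10 (h : HNTheory C D F V) :
    (∀ (X : C) (S : Subobject X), ¬ IsZero ((S : C)) →
      (∀ T : Subobject X, ¬ IsZero ((T : C)) → h.muLE (T : C) (S : C)) →
      h.StrictSub S ∧ h.Semistable (S : C)) ∧
    (∀ X : C, h.rkC X = 1 → h.Semistable X) := by
  have part1 : ∀ (X : C) (S : Subobject X), ¬ IsZero ((S : C)) →
      (∀ T : Subobject X, ¬ IsZero ((T : C)) → h.muLE (T : C) (S : C)) →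
      h.StrictSub S ∧ h.Semistable (S : C) := by
    intro X S hS hmax
    obtain ⟨T, hle, hTstrict, hiso⟩ := HN_saturation h S
    set u := Subobject.ofLE S T hle with hu
    have hTS : ¬ IsZero ((T : C)) := by
      intro hz
      exact hS (HN_isZero_of_F _ ((HN_isZero_F _ hz).of_iso (asIso (F.map u))))
    have hrk : h.rkC ((S : C)) = h.rkC ((T : C)) := h.rk_iso (asIso (F.map u))
    have hdeg : h.deg ((S : C)) ≤ h.deg ((T : C)) := h.deg_le_of_FIso u hiso
    have hmaxT := hmax T hTS
    simp only [HNTheory.muLE] at hmaxT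
    have hrne : h.rkC ((S : C)) ≠ 0 := HN_rkC_ne_zero h hS
    have hdeq : h.deg ((S : C)) = h.deg ((T : C)) := by
      by_contra hne
      have hlt : h.deg ((S : C)) < h.deg ((T : C)) := lt_of_le_of_ne hdeg hne
      have h1 : h.rkC ((S : C)) • h.deg ((S : C)) < h.rkC ((S : C)) • h.deg ((T : C)) :=
        nsmul_lt_nsmul_right hrne hlt
      rw [← hrk] at hmaxT
      exact absurd hmaxT (not_le.2 h1)
    haveI hui : IsIso u := (h.deg_eq_iff_of_FIso u hiso).1 hdeq
    have hST : S = T := by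
      refine le_antisymm hle (Subobject.le_of_comm (inv u) ?_)
      rw [← Subobject.ofLE_arrow hle, ← hu, IsIso.inv_hom_id_assoc]
    constructor
    · rw [hST]; exact hTstrict
    · refine ⟨hS, fun T' hT' _ => ?_⟩
      haveI : Mono (T'.arrow ≫ S.arrow) := mono_comp _ _
      have e : ((Subobject.mk (T'.arrow ≫ S.arrow) : Subobject X) : C) ≅ ((T' : C)) :=
        Subobject.underlyingIso _
      have hne : ¬ IsZero ((Subobject.mk (T'.arrow ≫ S.arrow) : Subobject X) : C) :=
        fun hz => hT' (hz.of_iso e.symm)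
      have hm := hmax _ hne
      simp only [HNTheory.muLE] at hm ⊢
      rwa [h.deg_iso e, HN_rkC_iso h e] at hm
  refine ⟨part1, fun X hr => ?_⟩
  have hXne : ¬ IsZero X := by
    intro hz
    have h0 : h.rkC X = 0 := (h.rk_eq_zero_iff (F.obj X)).2 (HN_isZero_F X hz)
    rw [hr] at h0
    exact one_ne_zero h0
  refine ⟨hXne, fun T hT _ => ?_⟩
  obtain ⟨Tb, hle, ⟨Z, g, hsse⟩, hiso⟩ := HN_saturation h T
  set u := Subobject.ofLE T Tb hle with hu
  have hrkT : h.rkC ((T : C)) = h.rkC ((Tb : C)) := h.rk_iso (asIso (F.map u))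
  have hr' : h.rkC X = h.rkC ((Tb : C)) + h.rk (F.obj Z) :=
    h.rk_additive _ (h.F_exact _ _ hsse)
  have hrTb : h.rkC ((Tb : C)) ≠ 0 := by
    rw [← hrkT]; exact HN_rkC_ne_zero h hT
  have hrk1 : h.rkC ((Tb : C)) = 1 ∧ h.rk (F.obj Z) = 0 := by
    rw [hr] at hr'
    omega
  have hZ : IsZero Z := HN_isZero_of_F Z ((h.rk_eq_zero_iff _).1 hrk1.2)
  have hg0 : g = 0 := hZ.eq_of_tgt g 0
  obtain ⟨hker⟩ := h.sse_isKernel _ _ hsse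
  obtain ⟨l, hl⟩ := KernelFork.IsLimit.lift' hker (𝟙 X) (by rw [hg0, comp_zero])
  rw [Fork.ι_ofι] at hl
  haveI : IsIso Tb.arrow := by
    refine ⟨l, ?_, hl⟩
    rw [← cancel_mono Tb.arrow, Category.assoc, hl, Category.id_comp, Category.comp_id]
  have hdegTb : h.deg ((Tb : C)) = h.deg X := h.deg_iso (asIso Tb.arrow)
  have hdegT : h.deg ((T : C)) ≤ h.deg X := by
    rw [← hdegTb]; exact h.deg_le_of_FIso u hiso
  show h.rkC X • h.deg ((T : C)) ≤ h.rkC ((T : C)) • h.deg X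
  rw [hr, hrkT, hrk1.1, one_smul, one_smul]
  exact hdegT
end

section
/- Let f : X → Y be a morphism in C with X and Y semistable of the same slope μ. Then ker f and im f are semistable of slope μ (or zero), and im f is a strict subobject of Y. -/
open CategoryTheory Limits

universe v u v' u'

variable (C : Type u) [Category.{v} C] [Preadditive C] [HasZeroObject C]
  [HasBinaryBiproducts C]
variable (D : Type u') [Category.{v'} D] [Abelian D]
variable (F : C ⥤ D) [F.Additive] [F.Faithful]
variable (V : Type*) [AddCommGroup V] [LinearOrder V] [IsOrderedAddMonoid V]

namespace HNTheory

attribute [local instance] CategoryTheory.Abelian.Pseudoelement.objectToSort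
  CategoryTheory.Abelian.Pseudoelement.homToFun

open CategoryTheory.Abelian

variable {C D F V}

set_option linter.unusedSectionVars false

section Arith

lemma nsmul_le_cancel {n : ℕ} (hn : 0 < n) {a b : V} (hle : n • a ≤ n • b) : a ≤ b :=
  le_of_nsmul_le_nsmul_right hn.ne' hle

lemma nsmul_eq_cancel {n : ℕ} (hn : 0 < n) {a b : V} (hab : n • a = n • b) : a = b :=
  le_antisymm (nsmul_le_cancel hn hab.le) (nsmul_le_cancel hn hab.ge)

end Arith

variable (h : HNTheory C D F V)

lemma isZero_of_FZero {A : C} (hA : IsZero (F.obj A)) : IsZero A := by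
  rw [IsZero.iff_id_eq_zero]
  apply F.map_injective
  rw [F.map_id, F.map_zero]
  exact hA.eq_of_src _ _

lemma rkC_pos {A : C} (hA : ¬ IsZero A) : 0 < h.rkC A := by
  rcases Nat.eq_zero_or_pos (h.rkC A) with h0 | h0
  · exact absurd (isZero_of_FZero ((h.rk_eq_zero_iff _).1 h0)) hA
  · exact h0

lemma rkC_iso {A B : C} (e : A ≅ B) : h.rkC A = h.rkC B := h.rk_iso (F.mapIso e)

lemma muLE_congr_left {A A' B : C} (e : A ≅ A') (hh : h.muLE A B) : h.muLE A' B := by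
  unfold muLE at hh ⊢
  rwa [← h.deg_iso e, ← h.rkC_iso e]

lemma muEQ_symm {A B : C} (hh : h.muEQ A B) : h.muEQ B A := hh.symm

/-- `μ(T) ≤ μ(B)` and `μ(A) = μ(B)` give `μ(T) ≤ μ(A)`, provided `rk B > 0`. -/
lemma muLE_of_muLE_of_muEQ {T A B : C} (h1 : h.muLE T B) (h2 : h.muEQ A B)
    (hB : 0 < h.rkC B) : h.muLE T A := by
  unfold muLE muEQ at *
  apply nsmul_le_cancel hB
  calc h.rkC B • h.rkC A • h.deg T = h.rkC A • h.rkC B • h.deg T := smul_comm _ _ _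
    _ ≤ h.rkC A • h.rkC T • h.deg B := nsmul_le_nsmul_right h1 _
    _ = h.rkC T • h.rkC A • h.deg B := smul_comm _ _ _
    _ = h.rkC T • h.rkC B • h.deg A := by rw [← h2]
    _ = h.rkC B • h.rkC T • h.deg A := smul_comm _ _ _

/-- Transitivity of `μ`-equality through an object of positive rank. -/
lemma muEQ_trans {A B B' : C} (h1 : h.muEQ A B) (h2 : h.muEQ B B')
    (hB : 0 < h.rkC B) : h.muEQ A B' := by
  unfold muEQ at *
  apply nsmul_eq_cancel hB
  calc h.rkC B • h.rkC B' • h.deg A = h.rkC B' • h.rkC B • h.deg A := smul_comm _ _ _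
    _ = h.rkC B' • h.rkC A • h.deg B := by rw [h1]
    _ = h.rkC A • h.rkC B' • h.deg B := smul_comm _ _ _
    _ = h.rkC A • h.rkC B • h.deg B' := by rw [h2]
    _ = h.rkC B • h.rkC A • h.deg B' := smul_comm _ _ _

/-- If `μ(A) ≤ μ(B)`, `μ(B) ≤ μ(B')` and `μ(A) = μ(B')` then `μ(B) = μ(A)`
(provided `rk B' > 0`). -/
lemma muEQ_sandwich {A B B' : C} (h1 : h.muLE A B) (h2 : h.muLE B B')
    (h3 : h.muEQ A B') (hB' : 0 < h.rkC B') : h.muEQ B A := by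
  unfold muLE muEQ at *
  refine le_antisymm ?_ h1
  apply nsmul_le_cancel hB'
  calc h.rkC B' • h.rkC A • h.deg B = h.rkC A • h.rkC B' • h.deg B := smul_comm _ _ _
    _ ≤ h.rkC A • h.rkC B • h.deg B' := nsmul_le_nsmul_right h2 _
    _ = h.rkC B • h.rkC A • h.deg B' := smul_comm _ _ _
    _ = h.rkC B • h.rkC B' • h.deg A := by rw [← h3]
    _ = h.rkC B' • h.rkC B • h.deg A := smul_comm _ _ _

/-- The degree of a zero object is zero. -/
lemma deg_of_isZero {A : C} (hA : IsZero A) : h.deg A = 0 := by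
  obtain ⟨⟨S, hS⟩, -⟩ := (h.strict_sub_bij A).2 ⊥
  obtain ⟨Z, g, hsse⟩ := hS
  have hadd := h.deg_additive _ _ hsse
  have hSzero : IsZero ((S : C)) := by
    have : S.arrow = 0 := hA.eq_of_tgt _ _
    exact IsZero.of_mono_eq_zero _ this
  have hZzero : IsZero Z := by
    have hg0 : g = 0 := hA.eq_of_src _ _
    have : Epi g := h.sse_epi _ _ hsse
    exact IsZero.of_epi_eq_zero g hg0
  rw [h.deg_iso (hSzero.iso hA), h.deg_iso (hZzero.iso hA)] at hadd
  exact (left_eq_add.mp hadd)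

/-- If `k` is both a kernel of `f` and a strict subobject, then `F` preserves this
kernel: the image of `F k` is the kernel of `F f`. -/
lemma imageF_eq_kernelF {X Y K Q : C} (f : X ⟶ Y) (k : K ⟶ X) (hk : k ≫ f = 0)
    (hker : Nonempty (IsLimit (KernelFork.ofι k hk))) (q : X ⟶ Q) (hq : h.SSE k q) :
    imageSubobject (F.map k) = kernelSubobject (F.map f) := by
  have hmk : Mono k := h.sse_mono k q hq
  obtain ⟨⟨K', hK'⟩, hK'im⟩ := (h.strict_sub_bij X).2 (kernelSubobject (F.map f))
  obtain ⟨Z', g', hsse'⟩ := hK'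
  simp only at hK'im
  -- `K' ≫ f = 0`
  have harr : (imageSubobject (F.map K'.arrow)).arrow ≫ F.map f = 0 := by
    rw [hK'im]; exact kernelSubobject_arrow_comp _
  have hcomp : K'.arrow ≫ f = 0 := by
    apply F.map_injective
    rw [F.map_comp, F.map_zero, ← imageSubobject_arrow_comp (F.map K'.arrow),
      Category.assoc, harr, comp_zero]
  obtain ⟨v, hv⟩ := KernelFork.IsLimit.lift' hker.some K'.arrow hcomp
  simp only [Fork.ι_ofι] at hv
  -- `k ≫ g' = 0`
  have hw : F.map K'.arrow ≫ F.map g' = 0 := by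
    rw [← F.map_comp, h.sse_comp_zero _ _ hsse', F.map_zero]
  have h2 : (imageSubobject (F.map K'.arrow)).arrow ≫ F.map g' = 0 := by
    rw [← imageToKernel_arrow _ _ hw, Category.assoc, kernelSubobject_arrow_comp, comp_zero]
  have h3 : (kernelSubobject (F.map f)).arrow ≫ F.map g' = 0 := by
    rw [← hK'im]; exact h2
  have hkf : F.map k ≫ F.map f = 0 := by rw [← F.map_comp, hk, F.map_zero]
  have h4 : F.map k ≫ F.map g' = 0 := by
    rw [← factorThruKernelSubobject_comp_arrow _ _ hkf, Category.assoc, h3, comp_zero]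
  have h5 : k ≫ g' = 0 := by
    apply F.map_injective; rw [F.map_comp, F.map_zero]; exact h4
  obtain ⟨u, hu⟩ := KernelFork.IsLimit.lift' (h.sse_isKernel _ _ hsse').some k h5
  simp only [Fork.ι_ofι] at hu
  -- `u` and `v` are mutually inverse
  have huv : u ≫ v = 𝟙 K := by
    rw [← cancel_mono k]; rw [Category.assoc, hv, hu, Category.id_comp]
  have hvu : v ≫ u = 𝟙 (K' : C) := by
    rw [← cancel_mono K'.arrow]; rw [Category.assoc, hu, hv, Category.id_comp]
  have : IsIso u := ⟨v, huv, hvu⟩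
  calc imageSubobject (F.map k) = imageSubobject (F.map (u ≫ K'.arrow)) := by rw [hu]
    _ = imageSubobject (F.map u ≫ F.map K'.arrow) := by rw [F.map_comp]
    _ = imageSubobject (F.map K'.arrow) := imageSubobject_iso_comp _ _
    _ = kernelSubobject (F.map f) := hK'im

/-- In the situation of the theorem, `F m` is a monomorphism. -/
lemma mono_F_map {X Y K Q : C} (f : X ⟶ Y) (k : K ⟶ X) (hk : k ≫ f = 0)
    (hker : Nonempty (IsLimit (KernelFork.ofι k hk))) (q : X ⟶ Q) (hq : h.SSE k q)
    (m : Q ⟶ Y) (hqm : q ≫ m = f) : Mono (F.map m) := by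
  have hkf : F.map k ≫ F.map f = 0 := by rw [← F.map_comp, hk, F.map_zero]
  have hexact : (ShortComplex.mk (F.map k) (F.map f) hkf).Exact :=
    (ShortComplex.exact_iff_image_eq_kernel _).2 (h.imageF_eq_kernelF f k hk hker q hq)
  have hepiq : Epi (F.map q) := (h.F_exact k q hq).epi_g
  apply Pseudoelement.mono_of_zero_of_map_zero
  intro x hx
  obtain ⟨y, hy⟩ := Pseudoelement.pseudo_surjective_of_epi (F.map q) x
  have hfy : F.map f y = 0 := by
    rw [← hqm, F.map_comp, Pseudoelement.comp_apply, hy, hx]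
  obtain ⟨z, hz⟩ := Pseudoelement.pseudo_exact_of_exact hexact y hfy
  have : F.map k ≫ F.map q = 0 := by
    rw [← F.map_comp, h.sse_comp_zero k q hq, F.map_zero]
  rw [← hy, ← hz, ← Pseudoelement.comp_apply, this]
  exact Pseudoelement.zero_apply _ _

lemma muLE_congr_left' {A A' B : C} (hdeg : h.deg A = h.deg A') (hrk : h.rkC A = h.rkC A')
    (hh : h.muLE A B) : h.muLE A' B := by
  unfold muLE at hh ⊢
  rwa [← hdeg, ← hrk]

end HNTheory

open HNTheory in


/-- (4.10) If `f : X ⟶ Y` is a morphism with `X`, `Y` semistable of the same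
slope `μ`, then the kernel `K` and image `Q` of `f` are semistable of slope
`μ` (when nonzero), and the image is a strict subobject of `Y`. -/
theorem stmt13 (h : HNTheory C D F V) {X Y : C} (f : X ⟶ Y)
    (hX : h.Semistable X) (hY : h.Semistable Y) (hmu : h.muEQ X Y)
    (K : C) (k : K ⟶ X) (hk : k ≫ f = 0)
    (hker : Nonempty (IsLimit (KernelFork.ofι k hk)))
    (Q : C) (q : X ⟶ Q) (hq : h.SSE k q)
    (m : Q ⟶ Y) [Mono m] (hqm : q ≫ m = f) :
    (¬ IsZero K → h.Semistable K ∧ h.muEQ K X) ∧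
    (¬ IsZero Q → h.Semistable Q ∧ h.muEQ Q X) ∧
    h.StrictSub (Subobject.mk m) := by
  obtain ⟨hXne, hXss⟩ := hX
  obtain ⟨hYne, hYss⟩ := hY
  have hmk : Mono k := h.sse_mono k q hq
  have heq : Epi q := h.sse_epi k q hq
  have hFexact := h.F_exact k q hq
  have hFm : Mono (F.map m) := h.mono_F_map f k hk hker q hq m hqm
  have hrkX : 0 < h.rkC X := h.rkC_pos hXne
  have hrkY : 0 < h.rkC Y := h.rkC_pos hYne
  have hdeg_add : h.deg X = h.deg K + h.deg Q := h.deg_additive k q hq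
  have hrk_add : h.rkC X = h.rkC K + h.rkC Q := h.rk_additive _ hFexact
  -- Step 1: if `Q` is nonzero then `μ(X) ≤ μ(Q)`.
  have L1 : ¬ IsZero Q → h.muLE X Q := by
    intro hQne
    by_cases hKz : IsZero K
    · have hFq : IsIso (F.map q) := hFexact.isIso_g_iff.2 (F.map_isZero hKz)
      have h1 : h.deg X ≤ h.deg Q := h.deg_le_of_FIso q hFq
      have h2 : h.rkC X = h.rkC Q := h.rk_iso (asIso (F.map q))
      show h.rkC Q • h.deg X ≤ h.rkC X • h.deg Q
      rw [← h2]
      exact nsmul_le_nsmul_right h1 _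
    · by_cases htop : Subobject.mk k = ⊤
      · exfalso
        have hik : IsIso k := (Subobject.isIso_iff_mk_eq_top k).2 htop
        have hf0 : f = 0 := by
          calc f = inv k ≫ (k ≫ f) := by simp
            _ = 0 := by rw [hk, comp_zero]
        have hq0 : q = 0 := zero_of_comp_mono m (by rw [hqm, hf0])
        exact hQne (IsZero.of_epi_eq_zero q hq0)
      · have h0 : ¬ IsZero ((Subobject.mk k : C)) := fun hz =>
          hKz (IsZero.of_iso hz (Subobject.underlyingIso k).symm)
        have h1 := hXss (Subobject.mk k) h0 htop
        have h2 : h.muLE K X := h.muLE_congr_left (Subobject.underlyingIso k) h1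
        replace h2 : h.rkC X • h.deg K ≤ h.rkC K • h.deg X := h2
        show h.rkC Q • h.deg X ≤ h.rkC X • h.deg Q
        have e1 : h.rkC K • h.deg X + h.rkC Q • h.deg X
            = h.rkC X • h.deg K + h.rkC X • h.deg Q := by
          rw [← nsmul_add, ← hdeg_add, ← add_nsmul, ← hrk_add]
        have e2 : h.rkC K • h.deg X + h.rkC Q • h.deg X
            ≤ h.rkC K • h.deg X + h.rkC X • h.deg Q := by
          rw [e1]; exact add_le_add_left h2 _
        exact le_of_add_le_add_left e2
  -- Step 2: if `Q` is nonzero, then the image is strict and `μ(Q) = μ(X) = μ(Y)`.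
  have key : ¬ IsZero Q → h.StrictSub (Subobject.mk m) ∧ h.muEQ Q X ∧ h.muEQ Q Y := by
    intro hQne
    obtain ⟨⟨S, hSstrict⟩, hSim⟩ := (h.strict_sub_bij Y).2 (imageSubobject (F.map m))
    obtain ⟨ZS, gS, hsseS⟩ := hSstrict
    simp only at hSim
    have monoFS : Mono (F.map S.arrow) := (h.F_exact _ _ hsseS).mono_f
    have hwS : F.map S.arrow ≫ F.map gS = 0 := by
      rw [← F.map_comp, h.sse_comp_zero _ _ hsseS, F.map_zero]
    have h2 : (imageSubobject (F.map S.arrow)).arrow ≫ F.map gS = 0 := by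
      rw [← imageToKernel_arrow _ _ hwS, Category.assoc, kernelSubobject_arrow_comp, comp_zero]
    have h2' : (imageSubobject (F.map m)).arrow ≫ F.map gS = 0 := by rw [← hSim]; exact h2
    have hmgS : m ≫ gS = 0 := by
      apply F.map_injective
      rw [F.map_comp, F.map_zero, ← imageSubobject_arrow_comp (F.map m), Category.assoc, h2',
        comp_zero]
    obtain ⟨w, hw⟩ := KernelFork.IsLimit.lift' (h.sse_isKernel _ _ hsseS).some m hmgS
    simp only [Fork.ι_ofι] at hw
    have hFwm : F.map w ≫ F.map S.arrow = F.map m := by rw [← F.map_comp, hw]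
    have monoFw : Mono (F.map w) := by
      have : Mono (F.map w ≫ F.map S.arrow) := by rw [hFwm]; exact hFm
      exact mono_of_mono (F.map w) (F.map S.arrow)
    have epiFw : Epi (F.map w) := by
      have hfta : (factorThruImageSubobject (F.map S.arrow) ≫ (Subobject.isoOfEq _ _ hSim).hom)
          ≫ (imageSubobject (F.map m)).arrow = F.map S.arrow := by
        rw [Category.assoc, Subobject.isoOfEq_hom, Subobject.ofLE_arrow,
          imageSubobject_arrow_comp]
      have monofta : Mono (factorThruImageSubobject (F.map S.arrow) ≫ (Subobject.isoOfEq _ _ hSim).hom) := by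
        have : Mono ((factorThruImageSubobject (F.map S.arrow) ≫ (Subobject.isoOfEq _ _ hSim).hom)
            ≫ (imageSubobject (F.map m)).arrow) := by
          rw [hfta]; exact monoFS
        exact mono_of_mono _ (imageSubobject (F.map m)).arrow
      have hiso : IsIso (factorThruImageSubobject (F.map S.arrow) ≫ (Subobject.isoOfEq _ _ hSim).hom) :=
        isIso_of_mono_of_epi _
      have hcomp2 : F.map w ≫ factorThruImageSubobject (F.map S.arrow) ≫ (Subobject.isoOfEq _ _ hSim).hom
          = factorThruImageSubobject (F.map m) := by
        rw [← cancel_mono (imageSubobject (F.map m)).arrow]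
        rw [Category.assoc, hfta, hFwm, imageSubobject_arrow_comp]
      have hrw : F.map w = factorThruImageSubobject (F.map m)
          ≫ inv (factorThruImageSubobject (F.map S.arrow) ≫ (Subobject.isoOfEq _ _ hSim).hom) := by
        rw [← hcomp2]; simp
      rw [hrw]; exact epi_comp _ _
    have isoFw : IsIso (F.map w) := isIso_of_mono_of_epi _
    have hSne : ¬ IsZero ((S : C)) := fun hz =>
      hQne (isZero_of_FZero (F := F) (IsZero.of_iso (F.map_isZero hz) (asIso (F.map w))))
    have hrkQS : h.rkC Q = h.rkC ((S : C)) := h.rk_iso (asIso (F.map w))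
    have hdegQS : h.deg Q ≤ h.deg ((S : C)) := h.deg_le_of_FIso w isoFw
    have hL1 : h.rkC Q • h.deg X ≤ h.rkC X • h.deg Q := L1 hQne
    have hmu' : h.rkC Y • h.deg X = h.rkC X • h.deg Y := hmu
    have hdegSQ : h.deg ((S : C)) ≤ h.deg Q := by
      by_cases hStop : S = ⊤
      · have haiso : IsIso S.arrow := by rw [hStop]; infer_instance
        have hFmiso : IsIso (F.map m) := by rw [← hFwm]; infer_instance
        have hrkQY : h.rkC Q = h.rkC Y := h.rk_iso (asIso (F.map m))
        have h5 : h.rkC X • h.deg Y ≤ h.rkC X • h.deg Q := by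
          calc h.rkC X • h.deg Y = h.rkC Y • h.deg X := hmu'.symm
            _ = h.rkC Q • h.deg X := by rw [hrkQY]
            _ ≤ h.rkC X • h.deg Q := hL1
        calc h.deg ((S : C)) = h.deg Y := h.deg_iso (asIso S.arrow)
          _ ≤ h.deg Q := nsmul_le_cancel hrkX h5
      · have hmuS : h.rkC Y • h.deg ((S : C)) ≤ h.rkC ((S : C)) • h.deg Y :=
          hYss S hSne hStop
        rw [← hrkQS] at hmuS
        have c1 : h.rkC X • h.rkC Y • h.deg ((S : C)) ≤ h.rkC X • h.rkC Y • h.deg Q := by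
          calc h.rkC X • h.rkC Y • h.deg ((S : C))
              ≤ h.rkC X • h.rkC Q • h.deg Y := nsmul_le_nsmul_right hmuS _
            _ = h.rkC Q • h.rkC X • h.deg Y := smul_comm _ _ _
            _ = h.rkC Q • h.rkC Y • h.deg X := by rw [← hmu']
            _ = h.rkC Y • h.rkC Q • h.deg X := smul_comm _ _ _
            _ ≤ h.rkC Y • h.rkC X • h.deg Q := nsmul_le_nsmul_right hL1 _
            _ = h.rkC X • h.rkC Y • h.deg Q := smul_comm _ _ _
        exact nsmul_le_cancel hrkY (nsmul_le_cancel hrkX c1)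
    have hdegEq : h.deg Q = h.deg ((S : C)) := le_antisymm hdegQS hdegSQ
    have isow : IsIso w := (h.deg_eq_iff_of_FIso w isoFw).1 hdegEq
    have hmkm : Subobject.mk m = S := by
      rw [← Subobject.mk_arrow S]
      exact Subobject.mk_eq_mk_of_comm m S.arrow (asIso w) hw
    have hstrict : h.StrictSub (Subobject.mk m) := by
      rw [hmkm]
      exact ⟨ZS, gS, hsseS⟩
    have hmuQY : h.muLE Q Y := by
      by_cases hStop : S = ⊤
      · have haiso : IsIso S.arrow := by rw [hStop]; infer_instance
        have hFmiso : IsIso (F.map m) := by rw [← hFwm]; infer_instance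
        have hrkQY : h.rkC Q = h.rkC Y := h.rk_iso (asIso (F.map m))
        have hdegQY : h.deg Q = h.deg Y := by
          rw [hdegEq]; exact h.deg_iso (asIso S.arrow)
        show h.rkC Y • h.deg Q ≤ h.rkC Q • h.deg Y
        rw [hrkQY, hdegQY]
      · exact h.muLE_congr_left' hdegEq.symm hrkQS.symm (hYss S hSne hStop)
    have hmuQX : h.muEQ Q X := h.muEQ_sandwich (L1 hQne) hmuQY hmu hrkY
    have hmuQY' : h.muEQ Q Y := h.muEQ_trans hmuQX hmu hrkX
    exact ⟨hstrict, hmuQX, hmuQY'⟩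
  -- Step 3: `μ(K) = μ(X)`.
  have hmuKX : h.muEQ K X := by
    by_cases hQz : IsZero Q
    · have hFk : IsIso (F.map k) := hFexact.isIso_f_iff.2 (F.map_isZero hQz)
      have h2 : h.rkC K = h.rkC X := h.rk_iso (asIso (F.map k))
      have h3 : h.deg Q = 0 := h.deg_of_isZero hQz
      have h4 : h.deg X = h.deg K := by rw [hdeg_add, h3, add_zero]
      show h.rkC X • h.deg K = h.rkC K • h.deg X
      rw [h4, h2]
    · obtain ⟨-, hQX, -⟩ := key hQz
      show h.rkC X • h.deg K = h.rkC K • h.deg X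
      have e1 : h.rkC X • h.deg K + h.rkC X • h.deg Q
          = h.rkC K • h.deg X + h.rkC Q • h.deg X := by
        rw [← nsmul_add, ← hdeg_add, ← add_nsmul, ← hrk_add]
      have e2 : h.rkC X • h.deg Q = h.rkC Q • h.deg X := hQX
      rw [e2] at e1
      exact add_right_cancel e1
  -- Step 4: semistability of `K`.
  have hssK : ¬ IsZero K → h.Semistable K := by
    intro hKne
    refine ⟨hKne, fun T hT0 hTne => ?_⟩
    have hmm : Mono (T.arrow ≫ k) := mono_comp _ _
    by_cases htop : Subobject.mk (T.arrow ≫ k) = ⊤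
    · exfalso
      have hTk : IsIso (T.arrow ≫ k) := (Subobject.isIso_iff_mk_eq_top _).2 htop
      have hks : (inv (T.arrow ≫ k) ≫ T.arrow) ≫ k = 𝟙 X := by
        rw [Category.assoc]; exact IsIso.inv_hom_id _
      have hki : IsIso k := by
        refine ⟨inv (T.arrow ≫ k) ≫ T.arrow, ?_, hks⟩
        rw [← cancel_mono k, Category.assoc, hks, Category.comp_id, Category.id_comp]
      have hTa : IsIso T.arrow := by
        have hTe : T.arrow = (T.arrow ≫ k) ≫ inv k := by simp
        rw [hTe]; infer_instance
      exact hTne (by rw [← Subobject.mk_arrow T]; exact Subobject.mk_eq_top_of_isIso _)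
    · have h0 : ¬ IsZero ((Subobject.mk (T.arrow ≫ k) : C)) := fun hz =>
        hT0 (IsZero.of_iso hz (Subobject.underlyingIso (T.arrow ≫ k)).symm)
      have h1 := hXss _ h0 htop
      have h2 : h.muLE ((T : C)) X :=
        h.muLE_congr_left (Subobject.underlyingIso (T.arrow ≫ k)) h1
      exact h.muLE_of_muLE_of_muEQ h2 hmuKX hrkX
  -- Step 5: semistability of `Q`.
  have hssQ : ¬ IsZero Q → h.Semistable Q := by
    intro hQne
    obtain ⟨-, -, hQY⟩ := key hQne
    refine ⟨hQne, fun T hT0 hTne => ?_⟩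
    have hmm : Mono (T.arrow ≫ m) := mono_comp _ _
    by_cases htop : Subobject.mk (T.arrow ≫ m) = ⊤
    · exfalso
      have hTm : IsIso (T.arrow ≫ m) := (Subobject.isIso_iff_mk_eq_top _).2 htop
      have hms : (inv (T.arrow ≫ m) ≫ T.arrow) ≫ m = 𝟙 Y := by
        rw [Category.assoc]; exact IsIso.inv_hom_id _
      have hmi : IsIso m := by
        refine ⟨inv (T.arrow ≫ m) ≫ T.arrow, ?_, hms⟩
        rw [← cancel_mono m, Category.assoc, hms, Category.comp_id, Category.id_comp]
      have hTa : IsIso T.arrow := by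
        have hTe : T.arrow = (T.arrow ≫ m) ≫ inv m := by simp
        rw [hTe]; infer_instance
      exact hTne (by rw [← Subobject.mk_arrow T]; exact Subobject.mk_eq_top_of_isIso _)
    · have h0 : ¬ IsZero ((Subobject.mk (T.arrow ≫ m) : C)) := fun hz =>
        hT0 (IsZero.of_iso hz (Subobject.underlyingIso (T.arrow ≫ m)).symm)
      have h1 := hYss _ h0 htop
      have h2 : h.muLE ((T : C)) Y :=
        h.muLE_congr_left (Subobject.underlyingIso (T.arrow ≫ m)) h1
      exact h.muLE_of_muLE_of_muEQ h2 hQY hrkY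
  -- Step 6: the image is always a strict subobject.
  have hstrict : h.StrictSub (Subobject.mk m) := by
    by_cases hQz : IsZero Q
    · obtain ⟨⟨S, hSstrict⟩, hSim⟩ := (h.strict_sub_bij Y).2 ⊥
      obtain ⟨ZS, gS, hsseS⟩ := hSstrict
      simp only at hSim
      have monoFS : Mono (F.map S.arrow) := (h.F_exact _ _ hsseS).mono_f
      have hSz : IsZero ((S : C)) := by
        apply isZero_of_FZero (F := F)
        have himg : imageSubobject (F.map S.arrow) = Subobject.mk (F.map S.arrow) :=
          imageSubobject_mono _
        have hbot : Subobject.mk (F.map S.arrow) = ⊥ := by rw [← himg, hSim]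
        have hz : IsZero ((Subobject.mk (F.map S.arrow) : D)) := by
          rw [hbot]; exact (isZero_zero D).of_iso Subobject.botCoeIsoZero
        exact IsZero.of_iso hz (Subobject.underlyingIso (F.map S.arrow)).symm
      have i : Q ≅ ((S : C)) := hQz.iso hSz
      have hcm : i.hom ≫ S.arrow = m := hQz.eq_of_src _ _
      have hmkm : Subobject.mk m = S := by
        rw [← Subobject.mk_arrow S]
        exact Subobject.mk_eq_mk_of_comm m S.arrow i hcm
      rw [hmkm]
      exact ⟨ZS, gS, hsseS⟩
    · exact (key hQz).1
  exact ⟨fun hK => ⟨hssK hK, hmuKX⟩, fun hQ => ⟨hssQ hQ, (key hQ).2.1⟩, hstrict⟩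
end
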